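/- There exist universal constants c₁, c₂ > 0 such that for every d ≥ 1 and every j with 1 ≤ j ≤ d, the sub-cube cut in G_d satisfies c₁·2^{d−j}·min(j, √d) ≤ h_K(A_j) ≤ c₂·2^{d−j}·min(j, √d), where A_j = {z_s : s_1 = s_2 = ⋯ = s_j = 0} ⊆ K; that is, the minimum cut in G_d separating A_j from K − A_j has capacity Θ(|A_j| · min(j, √d)). -/
import Mathlib


open Finset

/-- Vertices of the `d`-dimensional Boolean hypercube. -/
abbrev Cube (d : ℕ) := Fin d → Bool

/-- Hamming distance between two Boolean strings. -/
def hamm {d : ℕ} (s t : Cube d) : ℕ := (Finset.univ.filter fun i => s i ≠ t i).card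

/-- The vertex set of the graph `G_d`: `Sum.inl s` is the hypercube vertex `y_s`,
`Sum.inr s` is the terminal `z_s`. -/
abbrev Vtx (d : ℕ) := Cube d ⊕ Cube d

/-- Edge capacities of the graph `G_d`: hypercube edges (Hamming distance `1`) have
capacity `1`, each terminal `z_s` is attached to `y_s` by an edge of capacity `√d`. -/
noncomputable def gCap (d : ℕ) : Vtx d → Vtx d → ℝ
  | Sum.inl s, Sum.inl t => if hamm s t = 1 then 1 else 0
  | Sum.inl s, Sum.inr t => if s = t then Real.sqrt d else 0
  | Sum.inr s, Sum.inl t => if s = t then Real.sqrt d else 0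
  | Sum.inr _, Sum.inr _ => 0

/-- The cut function of a capacitated graph: total capacity of edges crossing `A`.
(Each unordered crossing edge `{u,v}` with `u ∈ A`, `v ∉ A` is counted once.) -/
noncomputable def cutFun {V : Type*} [Fintype V] [DecidableEq V]
    (c : V → V → ℝ) (A : Finset V) : ℝ :=
  ∑ u ∈ A, ∑ v ∈ Aᶜ, c u v

/-- The terminal set `K = {z_s}` of `G_d`. -/
def Kset (d : ℕ) : Finset (Vtx d) := Finset.univ.image Sum.inr

/-- The terminal cut function: `h_K(U) = min { h(A) : A ∩ K = U }`. -/
noncomputable def termCut {V : Type*} [Fintype V] [DecidableEq V]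
    (c : V → V → ℝ) (K U : Finset V) : ℝ :=
  sInf {x : ℝ | ∃ A : Finset V, A ∩ K = U ∧ cutFun c A = x}

/-- The terminal cut function of `G_d`, for a set `A` of terminals (identified with
Boolean strings). -/
noncomputable def hK (d : ℕ) (A : Finset (Cube d)) : ℝ :=
  termCut (gCap d) (Kset d) (A.image Sum.inr)

/-- The sub-cube cut `A_j`: terminals whose first `j` coordinates are `0`. -/
def subCubeCut (d j : ℕ) : Finset (Cube d) :=
  Finset.univ.filter fun s => ∀ i : Fin d, (i : ℕ) < j → s i = false

lemma gCap_nonneg (d : ℕ) (u v : Vtx d) : 0 ≤ gCap d u v := by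
  cases u <;> cases v <;> simp only [gCap] <;>
    first
    | exact le_refl 0
    | (split_ifs <;> first | positivity | exact le_refl 0)

lemma cutFun_nonneg {V : Type*} [Fintype V] [DecidableEq V]
    {c : V → V → ℝ} (hc : ∀ u v, 0 ≤ c u v) (A : Finset V) : 0 ≤ cutFun c A :=
  Finset.sum_nonneg fun _ _ => Finset.sum_nonneg fun _ _ => hc _ _

lemma cutFun_eq_sum_product {V : Type*} [Fintype V] [DecidableEq V]
    (c : V → V → ℝ) (A : Finset V) :
    cutFun c A = ∑ q ∈ A ×ˢ Aᶜ, c q.1 q.2 := by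
  rw [Finset.sum_product]; rfl

lemma termCut_le {V : Type*} [Fintype V] [DecidableEq V]
    {c : V → V → ℝ} (hc : ∀ u v, 0 ≤ c u v) {K U : Finset V}
    (A : Finset V) (hA : A ∩ K = U) : termCut c K U ≤ cutFun c A :=
  csInf_le ⟨0, fun _ ⟨B, _, hB⟩ => hB ▸ cutFun_nonneg hc B⟩ ⟨A, hA, rfl⟩

lemma le_termCut {V : Type*} [Fintype V] [DecidableEq V]
    {c : V → V → ℝ} {K U : Finset V} {b : ℝ}
    (hne : ∃ A : Finset V, A ∩ K = U)
    (hb : ∀ A : Finset V, A ∩ K = U → b ≤ cutFun c A) :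
    b ≤ termCut c K U := by
  apply le_csInf
  · obtain ⟨A, hA⟩ := hne; exact ⟨cutFun c A, A, hA, rfl⟩
  · rintro x ⟨A, hA, rfl⟩; exact hb A hA

lemma gCap_inr (d : ℕ) (s : Cube d) (v : Vtx d) :
    gCap d (Sum.inr s) v = if v = Sum.inl s then Real.sqrt d else 0 := by
  cases v with
  | inl t => simp only [gCap, Sum.inl.injEq]; simp [eq_comm]
  | inr t => simp [gCap]

lemma inr_mem_Kset (d : ℕ) (s : Cube d) : Sum.inr s ∈ Kset d := by
  simp [Kset]

lemma inl_notMem_Kset (d : ℕ) (s : Cube d) : Sum.inl s ∉ Kset d := by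
  simp [Kset]
def bflip {d : ℕ} (i : Fin d) (s : Cube d) : Cube d := Function.update s i (!s i)
lemma bflip_self {d : ℕ} (i : Fin d) (s : Cube d) : bflip i s i = !s i := by simp [bflip]
lemma bflip_ne {d : ℕ} {i j : Fin d} (s : Cube d) (h : j ≠ i) : bflip i s j = s j := by
  simp [bflip, Function.update_of_ne h]

-- membership of flipped strings in the subcube
lemma bflip_mem_iff {d j : ℕ} {s : Cube d} (hs : s ∈ subCubeCut d j) (i : Fin d) :
    bflip i s ∈ subCubeCut d j ↔ ¬ ((i : ℕ) < j) := by
  simp only [subCubeCut, mem_filter, mem_univ, true_and] at hs ⊢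
  constructor
  · intro h hij
    have := h i hij
    rw [bflip_self, hs i hij] at this
    simp at this
  · intro h i' hi'
    rw [bflip_ne s (by rintro rfl; exact h hi')]
    exact hs i' hi'

-- the terminal-only cut
lemma UB2 (d j : ℕ) :
    cutFun (gCap d) ((subCubeCut d j).image Sum.inr) =
      (subCubeCut d j).card * Real.sqrt d := by
  rw [cutFun, Finset.sum_image (by intro x _ y _ h; exact Sum.inr.inj h)]
  rw [Finset.sum_congr rfl (fun s hs => ?_), Finset.sum_const, nsmul_eq_mul]
  have h1 : (Sum.inl s : Vtx d) ∈ (Finset.image Sum.inr (subCubeCut d j))ᶜ := by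
    simp [Finset.mem_compl]
  calc ∑ v ∈ (Finset.image Sum.inr (subCubeCut d j))ᶜ, gCap d (Sum.inr s) v
      = ∑ v ∈ (Finset.image Sum.inr (subCubeCut d j))ᶜ,
          if v = Sum.inl s then Real.sqrt d else 0 := by
        exact Finset.sum_congr rfl fun v _ => gCap_inr d s v
    _ = Real.sqrt d := by rw [Finset.sum_ite_eq' _ (Sum.inl s) (fun _ => Real.sqrt d), if_pos h1]
lemma hamm_flip {d : ℕ} (i : Fin d) (s : Cube d) : hamm s (bflip i s) = 1 := by
  have : (Finset.univ.filter fun j => s j ≠ bflip i s j) = {i} := by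
    ext j
    simp only [mem_filter, mem_univ, true_and, mem_singleton]
    constructor
    · intro h
      by_contra hj
      exact h (bflip_ne s hj).symm
    · rintro rfl
      simp [bflip_self]
  simp [hamm, this]

lemma bflip_inj {d : ℕ} {i i' : Fin d} {s : Cube d} (h : bflip i s = bflip i' s) : i = i' := by
  by_contra hne
  have h1 : bflip i s i = bflip i' s i := by rw [h]
  rw [bflip_self, bflip_ne s hne] at h1
  exact (Bool.not_ne_self _ h1)

lemma hamm_eq_one {d : ℕ} {s t : Cube d} (h : hamm s t = 1) : ∃ i, t = bflip i s := by
  obtain ⟨i, hi⟩ := Finset.card_eq_one.mp h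
  refine ⟨i, funext fun j => ?_⟩
  have hmem : ∀ j', (j' ∈ (Finset.univ.filter fun i' => s i' ≠ t i')) ↔ j' = i := by
    intro j'; rw [hi]; simp
  by_cases hj : j = i
  · subst hj
    have : s j ≠ t j := by
      have := (hmem j).mpr rfl
      simpa using this
    rw [bflip_self]
    cases hs : s j <;> cases ht : t j <;> simp_all
  · have : ¬ (s j ≠ t j) := by
      intro hne
      exact hj ((hmem j).mp (by simpa using hne))
    rw [bflip_ne s hj]
    tauto

lemma card_filter_lt (d j : ℕ) (h : j ≤ d) :
    (univ.filter fun i : Fin d => (i : ℕ) < j).card = j := by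
  rw [Finset.card_filter]
  rw [Fin.sum_univ_eq_sum_range (fun i => if i < j then 1 else 0)]
  rw [← Finset.card_filter]
  have : (range d).filter (· < j) = range j := by
    ext x; simp only [mem_filter, mem_range]
    exact ⟨fun h => h.2, fun hx => ⟨lt_of_lt_of_le hx h, hx⟩⟩
  simp [this]

lemma UB1 (d j : ℕ) (hj : j ≤ d) :
    cutFun (gCap d) ((subCubeCut d j).image Sum.inl ∪ (subCubeCut d j).image Sum.inr) =
      (subCubeCut d j).card * j := by
  set S := subCubeCut d j with hS
  set A : Finset (Vtx d) := S.image Sum.inl ∪ S.image Sum.inr with hA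
  have hdisj : Disjoint (S.image Sum.inl) (S.image Sum.inr) := by
    rw [Finset.disjoint_left]
    rintro v hv1 hv2
    obtain ⟨a, _, rfl⟩ := Finset.mem_image.mp hv1
    obtain ⟨b, _, hb⟩ := Finset.mem_image.mp hv2
    exact absurd hb (by simp)
  rw [cutFun, Finset.sum_union hdisj]
  have hz : ∑ u ∈ S.image Sum.inr, ∑ v ∈ Aᶜ, gCap d u v = 0 := by
    apply Finset.sum_eq_zero
    intro u hu
    obtain ⟨s, hs, rfl⟩ := Finset.mem_image.mp hu
    apply Finset.sum_eq_zero
    intro v hv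
    rw [gCap_inr]
    rw [if_neg]
    rintro rfl
    rw [Finset.mem_compl] at hv
    exact hv (Finset.mem_union_left _ (Finset.mem_image_of_mem _ hs))
  rw [hz, add_zero]
  rw [Finset.sum_image (by intro x _ y _ h; exact Sum.inl.inj h)]
  rw [Finset.sum_congr rfl (fun s hs => ?_), Finset.sum_const, nsmul_eq_mul]
  -- inner sum equals j
  set T : Finset (Vtx d) :=
    (univ.filter fun i : Fin d => (i : ℕ) < j).image (fun i => Sum.inl (bflip i s)) with hT
  have hTsub : T ⊆ Aᶜ := by
    intro v hv
    obtain ⟨i, hi, rfl⟩ := Finset.mem_image.mp hv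
    rw [Finset.mem_filter] at hi
    rw [Finset.mem_compl, hA, Finset.mem_union]
    rintro (h1 | h2)
    · obtain ⟨b, hb, hbe⟩ := Finset.mem_image.mp h1
      have : bflip i s = b := (Sum.inl.inj hbe).symm
      subst this
      exact absurd hi.2 (by simpa using (bflip_mem_iff hs i).mp hb)
    · obtain ⟨b, _, hbe⟩ := Finset.mem_image.mp h2
      exact absurd hbe (by simp)
  have hval : ∀ v ∈ Aᶜ, gCap d (Sum.inl s) v = if v ∈ T then 1 else 0 := by
    intro v hv
    rw [Finset.mem_compl, hA, Finset.mem_union] at hv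
    push_neg at hv
    cases v with
    | inr t =>
      have hts : s ≠ t := by
        rintro rfl
        exact hv.2 (Finset.mem_image_of_mem _ hs)
      have : (Sum.inr t : Vtx d) ∉ T := by
        rw [hT]
        simp
      rw [if_neg this]
      simp [gCap, hts]
    | inl t =>
      have htS : t ∉ S := fun h => hv.1 (Finset.mem_image_of_mem _ h)
      by_cases hh : hamm s t = 1
      · obtain ⟨i, rfl⟩ := hamm_eq_one hh
        have hij : (i : ℕ) < j := by
          by_contra hctr
          exact htS ((bflip_mem_iff hs i).mpr hctr)
        have : (Sum.inl (bflip i s) : Vtx d) ∈ T := by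
          rw [hT]
          exact Finset.mem_image_of_mem _ (Finset.mem_filter.mpr ⟨Finset.mem_univ _, hij⟩)
        rw [if_pos this]
        simp [gCap, hh]
      · have : (Sum.inl t : Vtx d) ∉ T := by
          rw [hT]
          intro hmem
          obtain ⟨i, _, hie⟩ := Finset.mem_image.mp hmem
          have : t = bflip i s := (Sum.inl.inj hie).symm
          subst this
          exact hh (hamm_flip i s)
        rw [if_neg this]
        simp [gCap, hh]
  calc ∑ v ∈ Aᶜ, gCap d (Sum.inl s) v
      = ∑ v ∈ Aᶜ, if v ∈ T then (1:ℝ) else 0 := Finset.sum_congr rfl hval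
    _ = (T.card : ℝ) := by
        rw [Finset.sum_ite_mem, Finset.inter_eq_right.mpr hTsub, Finset.sum_const,
          nsmul_eq_mul, mul_one]
    _ = (j : ℝ) := by
        rw [hT, Finset.card_image_of_injOn, card_filter_lt d j hj]
        intro a _ b _ hab
        exact bflip_inj (Sum.inl.inj hab)
lemma bflip_invol {d : ℕ} (i : Fin d) (s : Cube d) : bflip i (bflip i s) = s := by
  funext k
  by_cases hk : k = i
  · subst hk; rw [bflip_self, bflip_self, Bool.not_not]
  · rw [bflip_ne _ hk, bflip_ne _ hk]

/-- Assignment of a crossing edge to each flow path `z_s → y_s → y_{flip i s} → z_{flip i s}`. -/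
def lbF (d : ℕ) (A : Finset (Vtx d)) : Cube d × Fin d → Vtx d × Vtx d := fun p =>
  if Sum.inl p.1 ∈ A then
    (if Sum.inl (bflip p.2 p.1) ∈ A then
      (Sum.inl (bflip p.2 p.1), Sum.inr (bflip p.2 p.1))
    else (Sum.inl p.1, Sum.inl (bflip p.2 p.1)))
  else (Sum.inr p.1, Sum.inl p.1)

lemma LB (d j : ℕ) (hd : 1 ≤ d) (hj1 : 1 ≤ j) (hjd : j ≤ d) (A : Finset (Vtx d))
    (hA : A ∩ Kset d = (subCubeCut d j).image Sum.inr) :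
    ((subCubeCut d j).card * min j (Nat.sqrt d) : ℝ) ≤ cutFun (gCap d) A := by
  set S := subCubeCut d j with hS
  set m := min j (Nat.sqrt d) with hm
  have hmj : m ≤ j := min_le_left _ _
  have hmsqrt : m ≤ Nat.sqrt d := min_le_right _ _
  have hmd : m ≤ d := le_trans hmj hjd
  -- membership facts
  have mem_inr : ∀ s : Cube d, Sum.inr s ∈ A ↔ s ∈ S := by
    intro s
    constructor
    · intro h
      have : Sum.inr s ∈ A ∩ Kset d := Finset.mem_inter.mpr ⟨h, inr_mem_Kset d s⟩
      rw [hA] at this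
      obtain ⟨b, hb, hbe⟩ := Finset.mem_image.mp this
      rwa [← Sum.inr.inj hbe]
    · intro h
      have : Sum.inr s ∈ A ∩ Kset d := by
        rw [hA]; exact Finset.mem_image_of_mem _ h
      exact (Finset.mem_inter.mp this).1
  set P : Finset (Cube d × Fin d) :=
    S ×ˢ (univ.filter fun i : Fin d => (i : ℕ) < m) with hP
  -- basic facts about elements of P
  have hPfacts : ∀ p ∈ P, p.1 ∈ S ∧ (p.2 : ℕ) < m ∧ bflip p.2 p.1 ∉ S := by
    intro p hp
    rw [hP, Finset.mem_product, Finset.mem_filter] at hp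
    refine ⟨hp.1, hp.2.2, ?_⟩
    intro hmem
    exact absurd (lt_of_lt_of_le hp.2.2 hmj) ((bflip_mem_iff hp.1 p.2).mp hmem)
  -- shapes of `lbF`
  have shape1 : ∀ r : Cube d × Fin d, ∀ a b : Cube d,
      lbF d A r = (Sum.inr a, Sum.inl b) → r.1 = a := by
    intro r a b hr
    unfold lbF at hr
    split_ifs at hr with g1 g2
    · exact absurd (congrArg Prod.fst hr) (by simp)
    · exact absurd (congrArg Prod.fst hr) (by simp)
    · exact Sum.inr.inj (congrArg Prod.fst hr)
  have shape2 : ∀ r : Cube d × Fin d, ∀ a b : Cube d,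
      lbF d A r = (Sum.inl a, Sum.inr b) → bflip r.2 r.1 = b := by
    intro r a b hr
    unfold lbF at hr
    split_ifs at hr with g1 g2
    · exact Sum.inr.inj (congrArg Prod.snd hr)
    · exact absurd (congrArg Prod.snd hr) (by simp)
    · exact absurd (congrArg Prod.snd hr) (by simp)
  have shape3 : ∀ r : Cube d × Fin d, ∀ a b : Cube d,
      lbF d A r = (Sum.inl a, Sum.inl b) → r.1 = a ∧ bflip r.2 r.1 = b := by
    intro r a b hr
    unfold lbF at hr
    split_ifs at hr with g1 g2
    · exact absurd (congrArg Prod.snd hr) (by simp)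
    · exact ⟨Sum.inl.inj (congrArg Prod.fst hr), Sum.inl.inj (congrArg Prod.snd hr)⟩
    · exact absurd (congrArg Prod.fst hr) (by simp)
  -- the assigned edge crosses the cut
  have hcross : ∀ p ∈ P, lbF d A p ∈ A ×ˢ Aᶜ := by
    intro p hp
    obtain ⟨hp1, hp2, hp3⟩ := hPfacts p hp
    have hin : Sum.inr p.1 ∈ A := (mem_inr p.1).mpr hp1
    have hout : Sum.inr (bflip p.2 p.1) ∉ A := fun h => hp3 ((mem_inr _).mp h)
    rw [Finset.mem_product]
    unfold lbF
    split_ifs with h1 h2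
    · exact ⟨h2, Finset.mem_compl.mpr hout⟩
    · exact ⟨h1, Finset.mem_compl.mpr h2⟩
    · exact ⟨hin, Finset.mem_compl.mpr h1⟩
  -- fiber bound
  have hfiber : ∀ q ∈ P.image (lbF d A),
      ((P.filter fun p => lbF d A p = q).card : ℝ) ≤ gCap d q.1 q.2 := by
    intro q hq
    obtain ⟨p₀, hp₀, rfl⟩ := Finset.mem_image.mp hq
    obtain ⟨hp₀1, hp₀2, hp₀3⟩ := hPfacts p₀ hp₀
    have sqrt_ge_one : (1 : ℝ) ≤ Real.sqrt d := by
      rw [show (1:ℝ) = Real.sqrt 1 by simp]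
      exact Real.sqrt_le_sqrt (by exact_mod_cast hd)
    unfold lbF
    split_ifs with h1 h2
    · -- q = (inl t₀, inr t₀) : fiber ≤ 1 ≤ √d
      set t₀ := bflip p₀.2 p₀.1 with ht₀
      have hcard : (P.filter fun p => lbF d A p = (Sum.inl t₀, Sum.inr t₀)).card ≤ 1 := by
        apply Finset.card_le_one.mpr
        intro p hp p' hp'
        rw [Finset.mem_filter] at hp hp'
        have hpk := shape2 p t₀ t₀ hp.2
        have hpk' := shape2 p' t₀ t₀ hp'.2
        obtain ⟨hq1, hq2, _⟩ := hPfacts p hp.1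
        obtain ⟨hq1', hq2', _⟩ := hPfacts p' hp'.1
        rw [hS, subCubeCut, Finset.mem_filter] at hq1 hq1'
        have h2eq : p.2 = p'.2 := by
          by_contra hne
          have e1 : t₀ p.2 = true := by
            rw [← hpk, bflip_self, hq1.2 p.2 (lt_of_lt_of_le hq2 hmj)]
            rfl
          have e2 : t₀ p.2 = false := by
            rw [← hpk', bflip_ne _ hne, hq1'.2 p.2 (lt_of_lt_of_le hq2 hmj)]
          rw [e1] at e2
          exact absurd e2 (by simp)
        have h1eq : p.1 = p'.1 := by
          have e1 : p.1 = bflip p.2 t₀ := by rw [← hpk, bflip_invol]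
          have e2 : p'.1 = bflip p.2 t₀ := by rw [h2eq, ← hpk', bflip_invol]
          rw [e1, e2]
        exact Prod.ext h1eq h2eq
      have hcap : gCap d ((Sum.inl t₀, Sum.inr t₀) : Vtx d × Vtx d).1 ((Sum.inl t₀, Sum.inr t₀) : Vtx d × Vtx d).2
          = Real.sqrt d := by simp [gCap]
      rw [hcap]
      calc ((P.filter fun p => lbF d A p = (Sum.inl t₀, Sum.inr t₀)).card : ℝ)
          ≤ 1 := by exact_mod_cast hcard
        _ ≤ Real.sqrt d := sqrt_ge_one
    · -- q = (inl s₀, inl t₀) : fiber ≤ 1 = capacity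
      set t₀ := bflip p₀.2 p₀.1 with ht₀
      have hcard : (P.filter fun p => lbF d A p = (Sum.inl p₀.1, Sum.inl t₀)).card ≤ 1 := by
        apply Finset.card_le_one.mpr
        intro p hp p' hp'
        rw [Finset.mem_filter] at hp hp'
        obtain ⟨ha1, ha2⟩ := shape3 p p₀.1 t₀ hp.2
        obtain ⟨hb1, hb2⟩ := shape3 p' p₀.1 t₀ hp'.2
        have : bflip p.2 p.1 = bflip p'.2 p.1 := by
          rw [ha2, ha1, ← hb1, hb2]
        have h2 : p.2 = p'.2 := bflip_inj this
        exact Prod.ext (ha1.trans hb1.symm) h2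
      have hcap : gCap d ((Sum.inl p₀.1, Sum.inl t₀) : Vtx d × Vtx d).1 ((Sum.inl p₀.1, Sum.inl t₀) : Vtx d × Vtx d).2 = 1 := by
        simp only [gCap]
        rw [if_pos (hamm_flip p₀.2 p₀.1)]
      rw [hcap]
      exact_mod_cast hcard
    · -- q = (inr s₀, inl s₀) : fiber ≤ m ≤ √d
      have hsub : (P.filter fun p => lbF d A p = (Sum.inr p₀.1, Sum.inl p₀.1)) ⊆
          {p₀.1} ×ˢ (univ.filter fun i : Fin d => (i : ℕ) < m) := by
        intro p hp
        rw [Finset.mem_filter] at hp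
        obtain ⟨hpP, hpf⟩ := hp
        rw [Finset.mem_product, Finset.mem_singleton]
        exact ⟨shape1 p p₀.1 p₀.1 hpf,
          Finset.mem_filter.mpr ⟨Finset.mem_univ _, (hPfacts p hpP).2.1⟩⟩
      have hcard : (P.filter fun p => lbF d A p = (Sum.inr p₀.1, Sum.inl p₀.1)).card ≤ m := by
        calc _ ≤ ({p₀.1} ×ˢ (univ.filter fun i : Fin d => (i : ℕ) < m)).card :=
              Finset.card_le_card hsub
          _ = m := by rw [Finset.card_product, Finset.card_singleton, one_mul,
              card_filter_lt d m hmd]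
      have hcap : gCap d ((Sum.inr p₀.1, Sum.inl p₀.1) : Vtx d × Vtx d).1 ((Sum.inr p₀.1, Sum.inl p₀.1) : Vtx d × Vtx d).2
          = Real.sqrt d := by simp [gCap]
      rw [hcap]
      calc ((P.filter fun p => lbF d A p = (Sum.inr p₀.1, Sum.inl p₀.1)).card : ℝ)
          ≤ (m : ℝ) := by exact_mod_cast hcard
        _ ≤ (Nat.sqrt d : ℝ) := by exact_mod_cast hmsqrt
        _ ≤ Real.sqrt d := Real.nat_sqrt_le_real_sqrt
  -- assemble
  have hPcard : P.card = S.card * m := by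
    rw [hP, Finset.card_product, card_filter_lt d m hmd]
  have step1 : (P.card : ℝ) ≤ ∑ q ∈ P.image (lbF d A), gCap d q.1 q.2 := by
    rw [Finset.card_eq_sum_card_fiberwise
      (fun p hp => Finset.mem_image_of_mem (lbF d A) hp)]
    push_cast
    exact Finset.sum_le_sum hfiber
  have step2 : ∑ q ∈ P.image (lbF d A), gCap d q.1 q.2 ≤ cutFun (gCap d) A := by
    rw [cutFun_eq_sum_product]
    apply Finset.sum_le_sum_of_subset_of_nonneg
    · intro q hq
      obtain ⟨p, hp, rfl⟩ := Finset.mem_image.mp hq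
      exact hcross p hp
    · intro q _ _
      exact gCap_nonneg d q.1 q.2
  calc ((S.card : ℝ) * (m : ℝ)) = (P.card : ℝ) := by rw [hPcard]; push_cast; ring
    _ ≤ _ := le_trans step1 step2

lemma cond2 (d j : ℕ) :
    ((subCubeCut d j).image Sum.inr) ∩ Kset d = (subCubeCut d j).image Sum.inr := by
  apply Finset.inter_eq_left.mpr
  intro v hv
  obtain ⟨s, _, rfl⟩ := Finset.mem_image.mp hv
  exact inr_mem_Kset d s

lemma cond1 (d j : ℕ) :
    ((subCubeCut d j).image Sum.inl ∪ (subCubeCut d j).image Sum.inr) ∩ Kset d =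
      (subCubeCut d j).image Sum.inr := by
  rw [Finset.union_inter_distrib_right]
  have e1 : (subCubeCut d j).image Sum.inl ∩ Kset d = ∅ := by
    apply Finset.eq_empty_of_forall_notMem
    intro v hv
    rw [Finset.mem_inter] at hv
    obtain ⟨s, _, rfl⟩ := Finset.mem_image.mp hv.1
    exact inl_notMem_Kset d s hv.2
  rw [e1, Finset.empty_union, Finset.inter_eq_left.mpr]
  intro v hv
  obtain ⟨s, _, rfl⟩ := Finset.mem_image.mp hv
  exact inr_mem_Kset d s

lemma card_subCubeCut (d j : ℕ) (h : j ≤ d) : (subCubeCut d j).card = 2 ^ (d - j) := by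
  have key : (subCubeCut d j).card = (univ : Finset (Cube (d - j))).card := by
    apply Finset.card_bij' (i := fun s _ => (fun k : Fin (d-j) => s ⟨j + k.val, by omega⟩))
      (j := fun g _ => (fun i : Fin d => if h' : j ≤ i.val then g ⟨i.val - j, by omega⟩ else false))
    · intro a ha
      funext i
      by_cases h' : j ≤ i.val
      · simp only [dif_pos h']
        congr 1
        ext; simp; omega
      · simp only [dif_neg h']
        have := (Finset.mem_filter.mp ha).2 i (by omega)
        exact this.symm
    · intro g hg
      funext k
      have h' : j ≤ j + k.val := Nat.le_add_right _ _
      simp only [dif_pos h']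
      congr 1
      ext; simp
    · intro a ha; exact mem_univ _
    · intro g hg
      simp only [subCubeCut, mem_filter, mem_univ, true_and]
      intro i hi
      rw [dif_neg (by omega)]
  rw [key]
  simp [Finset.card_univ]


/-- There are universal constants `c₁, c₂ > 0` such that for every
`d ≥ 1` and every `1 ≤ j ≤ d`, the minimum cut of `G_d` separating the sub-cube cut
`A_j` from `K - A_j` has capacity `Θ(2^{d-j} · min(j, √d))`. -/
theorem subcube_cut_capacity :
    ∃ c₁ c₂ : ℝ, 0 < c₁ ∧ 0 < c₂ ∧ ∀ d : ℕ, 1 ≤ d → ∀ j : ℕ, 1 ≤ j → j ≤ d →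
      c₁ * 2 ^ (d - j) * min (j : ℝ) (Real.sqrt d) ≤ hK d (subCubeCut d j) ∧
      hK d (subCubeCut d j) ≤ c₂ * 2 ^ (d - j) * min (j : ℝ) (Real.sqrt d) := by
  refine ⟨1/2, 1, by norm_num, one_pos, fun d hd j hj1 hjd => ?_⟩
  have hcard : (((subCubeCut d j).card : ℕ) : ℝ) = 2 ^ (d - j) := by
    rw [card_subCubeCut d j hjd]; push_cast; ring
  have hpow : (0:ℝ) ≤ 2 ^ (d - j) := by positivity
  constructor
  · -- lower bound
    unfold hK
    apply le_termCut ⟨(subCubeCut d j).image Sum.inr, cond2 d j⟩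
    intro A hA
    have hLB := LB d j hd hj1 hjd A hA
    rw [hcard] at hLB
    have h2m : min (j:ℝ) (Real.sqrt d) ≤ 2 * ((min j (Nat.sqrt d) : ℕ) : ℝ) := by
      rcases le_total j (Nat.sqrt d) with h | h
      · rw [min_eq_left h]
        have : (0:ℝ) ≤ j := by positivity
        calc min (j:ℝ) (Real.sqrt d) ≤ j := min_le_left _ _
          _ ≤ 2 * j := by linarith
      · rw [min_eq_right h]
        have h1 : 1 ≤ Nat.sqrt d := by
          have := Nat.sqrt_le_sqrt hd
          simpa using this
        have h1' : (1:ℝ) ≤ (Nat.sqrt d : ℝ) := by exact_mod_cast h1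
        calc min (j:ℝ) (Real.sqrt d) ≤ Real.sqrt d := min_le_right _ _
          _ ≤ (Nat.sqrt d : ℝ) + 1 := by exact_mod_cast Real.real_sqrt_le_nat_sqrt_succ
          _ ≤ 2 * (Nat.sqrt d : ℝ) := by linarith
    have := mul_le_mul_of_nonneg_left h2m hpow
    linarith
  · -- upper bound
    unfold hK
    rcases le_total (j:ℝ) (Real.sqrt d) with h | h
    · rw [min_eq_left h]
      calc termCut (gCap d) (Kset d) ((subCubeCut d j).image Sum.inr)
          ≤ cutFun (gCap d)
            ((subCubeCut d j).image Sum.inl ∪ (subCubeCut d j).image Sum.inr) :=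
            termCut_le (gCap_nonneg d) _ (cond1 d j)
        _ = ((subCubeCut d j).card : ℝ) * j := UB1 d j hjd
        _ = 1 * 2 ^ (d - j) * (j:ℝ) := by rw [hcard]; ring
    · rw [min_eq_right h]
      calc termCut (gCap d) (Kset d) ((subCubeCut d j).image Sum.inr)
          ≤ cutFun (gCap d) ((subCubeCut d j).image Sum.inr) :=
            termCut_le (gCap_nonneg d) _ (cond2 d j)
        _ = ((subCubeCut d j).card : ℝ) * Real.sqrt d := UB2 d j
        _ = 1 * 2 ^ (d - j) * Real.sqrt d := by rw [hcard]; ring
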